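/- Let M be a graded right D-module over the q-divided power algebra D equipped with a q-connection ∇. Then ∇ : M → M is surjective, and the natural map ker(∇) ⊗_k D → M is an isomorphism of D-modules. -/

import Mathlib

open TensorProduct

noncomputable def qPoly (n : ℕ) : Polynomial ℤ :=
  ∑ i ∈ Finset.range n, Polynomial.X ^ i

noncomputable def qFact (n : ℕ) : Polynomial ℤ :=
  ∏ i ∈ Finset.range n, qPoly (i + 1)

noncomputable def gaussPoly (n m : ℕ) : Polynomial ℤ :=
  Polynomial.divByMonic (qFact n) (qFact m * qFact (n - m))

noncomputable def qBinom (k : Type*) [CommRing k] (q : k) (n m : ℕ) : k :=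
  Polynomial.eval₂ (Int.castRingHom k) q (gaussPoly n m)

/-- Right multiplication on the `q`-divided power algebra `D = ⊕ k·x^{[n]}` (realized as
`ℕ →₀ k`): `x^{[a]}·x^{[b]} = [a+b choose a]_q x^{[a+b]}`. -/
noncomputable def mulRightL {k : Type*} [CommRing k] (q : k) (g : ℕ →₀ k) :
    (ℕ →₀ k) →ₗ[k] (ℕ →₀ k) :=
  Finsupp.lsum k fun a =>
    g.sum fun b cb =>
      (qBinom k q (a + b) a * cb) • (Finsupp.lsingle (a + b) : k →ₗ[k] (ℕ →₀ k))

/-- The multiplication of the `q`-divided power algebra `D`. -/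
noncomputable def Dmul {k : Type*} [CommRing k] (q : k) (f g : ℕ →₀ k) : ℕ →₀ k :=
  mulRightL q g f

/-- The degree `-1` map `d : D → D`, `x^{[n]} ↦ x^{[n-1]}` (and `x^{[0]} ↦ 0`). -/
noncomputable def DdL {k : Type*} [CommRing k] : (ℕ →₀ k) →ₗ[k] (ℕ →₀ k) :=
  Finsupp.lsum k fun a =>
    if a = 0 then 0 else (Finsupp.lsingle (a - 1) : k →ₗ[k] (ℕ →₀ k))


/-- Proposition: let `M` be a graded right `D`-module over the `q`-divided power algebra
`D` (realized as `ℕ →₀ k`) equipped with a `q`-connection `conn`. Then `conn : M → M` is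
surjective, and the natural map `ker(conn) ⊗_k D → M` (induced by the right action) is an
isomorphism of `D`-modules. -/
theorem qConnection_surjective_and_kernel_tensor_iso {k : Type*} [Field k] (q : k)
    {M : Type*} [AddCommGroup M] [Module k M]
    (act : M →ₗ[k] (ℕ →₀ k) →ₗ[k] M)
    (hactmul : ∀ (x : M) (f g : ℕ →₀ k), act (act x f) g = act x (Dmul q f g))
    (hact1 : ∀ x : M, act x (Finsupp.single 0 1) = x)
    (ℳ : ℕ → Submodule k M)
    (hdecomp : DirectSum.IsInternal ℳ)
    (hgr : ∀ (n m : ℕ) (c : k), ∀ x ∈ ℳ n, act x (Finsupp.single m c) ∈ ℳ (n + m))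
    (conn : Module.End k M)
    (hconn0 : ∀ x ∈ ℳ 0, conn x = 0)
    (hconndeg : ∀ n : ℕ, ∀ x ∈ ℳ (n + 1), conn x ∈ ℳ n)
    (hconn : ∀ (m : ℕ) (c : k) (x : M),
      conn (act x (Finsupp.single m c)) =
        act x (DdL (Finsupp.single m c)) + q ^ m • act (conn x) (Finsupp.single m c)) :
    let κ : (↥(LinearMap.ker conn) ⊗[k] (ℕ →₀ k)) →ₗ[k] M :=
      TensorProduct.lift (act ∘ₗ (LinearMap.ker conn).subtype);
    Function.Surjective conn ∧ Function.Bijective κ ∧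
      (∀ (z : ↥(LinearMap.ker conn) ⊗[k] (ℕ →₀ k)) (f : ℕ →₀ k),
        κ (TensorProduct.map LinearMap.id (mulRightL q f) z) = act (κ z) f) := by

  intro κ
  have hκ : κ = TensorProduct.lift (act ∘ₗ (LinearMap.ker conn).subtype) := rfl
  -- computation of DdL on singles
  have hDdL : ∀ (a : ℕ) (b : k),
      DdL (Finsupp.single a b) = if a = 0 then 0 else Finsupp.single (a-1) b := by
    intro a b
    rw [DdL, Finsupp.lsum_single]
    split_ifs <;> simp
  -- Leibniz rule for horizontal sections
  have L1 : ∀ x : LinearMap.ker conn, ∀ f : ℕ →₀ k,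
      conn (act (x : M) f) = act (x : M) (DdL f) := by
    intro x f
    have hx : conn (x : M) = 0 := LinearMap.mem_ker.mp x.2
    have : (conn ∘ₗ act (x : M)) = (act (x : M) ∘ₗ DdL) := by
      apply Finsupp.lhom_ext
      intro a b
      simp only [LinearMap.comp_apply]
      rw [hconn a b, hx, map_zero, LinearMap.zero_apply, smul_zero, add_zero]
    exact LinearMap.congr_fun this f
  -- the comparison map on `ℕ →₀ ker conn`
  set κ' : (ℕ →₀ ↥(LinearMap.ker conn)) →ₗ[k] M :=
      Finsupp.lsum k fun j => (act.flip (Finsupp.single j 1)) ∘ₗ (LinearMap.ker conn).subtype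
      with hκ'def
  have hκ's : ∀ (j : ℕ) (x : LinearMap.ker conn),
      κ' (Finsupp.single j x) = act (x : M) (Finsupp.single j 1) := by
    intro j x
    rw [hκ'def, Finsupp.lsum_single]
    rfl
  have hκ'0 : ∀ x : LinearMap.ker conn, κ' (Finsupp.single 0 x) = (x : M) := by
    intro x; rw [hκ's, hact1]
  -- shift down
  set sd : (ℕ →₀ ↥(LinearMap.ker conn)) →ₗ[k] (ℕ →₀ ↥(LinearMap.ker conn)) :=
      Finsupp.lsum k fun j => if j = 0 then 0 else Finsupp.lsingle (j - 1) with hsddef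
  have hsds : ∀ (j : ℕ) (x : LinearMap.ker conn),
      sd (Finsupp.single j x) = if j = 0 then 0 else Finsupp.single (j-1) x := by
    intro j x
    rw [hsddef, Finsupp.lsum_single]
    split_ifs <;> simp
  have hsd_apply : ∀ (g : ℕ →₀ ↥(LinearMap.ker conn)) (i : ℕ), sd g i = g (i + 1) := by
    intro g i
    have : ((Finsupp.lapply i : (ℕ →₀ ↥(LinearMap.ker conn)) →ₗ[k] ↥(LinearMap.ker conn)) ∘ₗ sd)
        = (Finsupp.lapply (i+1) : (ℕ →₀ ↥(LinearMap.ker conn)) →ₗ[k] ↥(LinearMap.ker conn)) := by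
      apply Finsupp.lhom_ext
      intro j x
      simp only [LinearMap.comp_apply, Finsupp.lapply_apply, hsds]
      rcases j with _ | j
      · simp [Finsupp.single_apply]
      · simp only [Nat.succ_ne_zero, if_false, Nat.succ_sub_one]
        simp [Finsupp.single_apply]
    exact LinearMap.congr_fun this g
  -- conn ∘ κ' = κ' ∘ sd
  have hconnκ' : ∀ g : ℕ →₀ ↥(LinearMap.ker conn), conn (κ' g) = κ' (sd g) := by
    intro g
    have : (conn ∘ₗ κ') = (κ' ∘ₗ sd) := by
      apply Finsupp.lhom_ext
      intro j x
      simp only [LinearMap.comp_apply, hκ's, hsds, L1, hDdL]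
      split_ifs with h
      · simp
      · rw [hκ's]
    exact LinearMap.congr_fun this g
  -- injectivity of κ'
  have inj_aux : ∀ N : ℕ, ∀ g : ℕ →₀ ↥(LinearMap.ker conn),
      (∀ j, N ≤ j → g j = 0) → κ' g = 0 → g = 0 := by
    intro N
    induction N with
    | zero =>
      intro g hg _
      ext j
      rw [hg j (Nat.zero_le j)]; rfl
    | succ N ih =>
      intro g hg h0
      have hsd0 : sd g = 0 := by
        apply ih
        · intro j hj
          rw [hsd_apply]
          exact hg (j+1) (by omega)
        · rw [← hconnκ' g, h0, map_zero]
      have hg1 : ∀ j, 1 ≤ j → g j = 0 := by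
        intro j hj
        have := congrArg (fun h : ℕ →₀ ↥(LinearMap.ker conn) => h (j-1)) hsd0
        simp only [Finsupp.coe_zero, Pi.zero_apply] at this
        rw [hsd_apply] at this
        rwa [Nat.sub_add_cancel hj] at this
      have hgeq : g = Finsupp.single 0 (g 0) := by
        ext j
        rcases Nat.eq_zero_or_pos j with h | h
        · subst h; simp
        · rw [hg1 j h, Finsupp.single_apply, if_neg (by omega)]
      have hg00 : ((g 0 : LinearMap.ker conn) : M) = 0 := by
        rw [← hκ'0 (g 0), ← hgeq, h0]
      have hg0 : g 0 = 0 := Subtype.ext hg00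
      rw [hgeq, hg0, Finsupp.single_zero]
  have hκ'inj : Function.Injective κ' := by
    rw [injective_iff_map_eq_zero]
    intro g hg0
    refine inj_aux (g.support.sup id + 1) g (fun j hj => ?_) hg0
    by_contra h
    have h1 : j ∈ g.support := Finsupp.mem_support_iff.mpr h
    have h2 := Finset.le_sup (f := id) h1
    simp only [id_eq] at h2
    omega
  -- shift up and integration
  set su : (ℕ →₀ ↥(LinearMap.ker conn)) →ₗ[k] (ℕ →₀ ↥(LinearMap.ker conn)) :=
      Finsupp.lsum k fun j => Finsupp.lsingle (j + 1) with hsudef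
  have hsus : ∀ (j : ℕ) (x : LinearMap.ker conn),
      su (Finsupp.single j x) = Finsupp.single (j+1) x := by
    intro j x; rw [hsudef, Finsupp.lsum_single]; rfl
  have hint : ∀ g : ℕ →₀ ↥(LinearMap.ker conn), conn (κ' (su g)) = κ' g := by
    intro g
    have : (conn ∘ₗ κ' ∘ₗ su) = κ' := by
      apply Finsupp.lhom_ext
      intro j x
      simp only [LinearMap.comp_apply, hsus, hκ's, L1, hDdL]
      rw [if_neg (Nat.succ_ne_zero j), Nat.succ_sub_one]
    exact LinearMap.congr_fun this g
  -- surjectivity of κ'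
  have step : ∀ y : M, (∃ g, κ' g = conn y) → ∃ g, κ' g = y := by
    rintro y ⟨g, hg⟩
    have hker : y - κ' (su g) ∈ LinearMap.ker conn := by
      rw [LinearMap.mem_ker, map_sub, hint, hg, sub_self]
    refine ⟨su g + Finsupp.single 0 ⟨y - κ' (su g), hker⟩, ?_⟩
    rw [map_add, hκ'0]
    simp
  have ranges : ∀ n : ℕ, ∀ y ∈ ℳ n, ∃ g, κ' g = y := by
    intro n
    induction n with
    | zero =>
      intro y hy
      exact step y ⟨0, by rw [map_zero, hconn0 y hy]⟩
    | succ n ih =>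
      intro y hy
      exact step y (ih (conn y) (hconndeg n y hy))
  have hκ'surj : Function.Surjective κ' := by
    intro y
    have hy : y ∈ ⨆ n, ℳ n := by
      rw [hdecomp.submodule_iSup_eq_top]; trivial
    refine Submodule.iSup_induction (motive := fun z => ∃ g, κ' g = z) ℳ hy ranges
      ⟨0, map_zero κ'⟩ ?_
    rintro y z ⟨g1, h1⟩ ⟨g2, h2⟩
    exact ⟨g1 + g2, by rw [map_add, h1, h2]⟩
  -- comparison κ = κ' ∘ finsuppScalarRight
  have hcomp : ∀ z : ↥(LinearMap.ker conn) ⊗[k] (ℕ →₀ k),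
      κ z = κ' (TensorProduct.finsuppScalarRight k k ↥(LinearMap.ker conn) ℕ z) := by
    intro z
    have heq : κ = κ' ∘ₗ (TensorProduct.finsuppScalarRight k k ↥(LinearMap.ker conn) ℕ :
        ↥(LinearMap.ker conn) ⊗[k] (ℕ →₀ k) →ₗ[k] (ℕ →₀ ↥(LinearMap.ker conn))) := by
      rw [hκ]
      apply TensorProduct.ext'
      intro x f
      simp only [LinearMap.comp_apply, LinearEquiv.coe_coe, TensorProduct.lift.tmul,
        Submodule.subtype_apply]
      rw [TensorProduct.finsuppScalarRight_apply_tmul, map_finsuppSum]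
      conv_lhs => rw [← Finsupp.sum_single f, map_finsuppSum]
      apply Finsupp.sum_congr
      intro i _
      rw [hκ's, Submodule.coe_smul, map_smul, LinearMap.smul_apply,
        ← map_smul (act (x : M)), Finsupp.smul_single, smul_eq_mul, mul_one]
    rw [heq]; rfl
  refine ⟨?_, ⟨?_, ?_⟩, ?_⟩
  · -- surjectivity of conn
    intro y
    obtain ⟨g, hg⟩ := hκ'surj y
    exact ⟨κ' (su g), by rw [hint, hg]⟩
  · -- injectivity of κ
    intro a b hab
    apply (TensorProduct.finsuppScalarRight k k ↥(LinearMap.ker conn) ℕ).injective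
    apply hκ'inj
    rw [← hcomp, ← hcomp]
    exact hab
  · -- surjectivity of κ
    intro y
    obtain ⟨g, hg⟩ := hκ'surj y
    exact ⟨(TensorProduct.finsuppScalarRight k k ↥(LinearMap.ker conn) ℕ).symm g,
      by rw [hcomp, LinearEquiv.apply_symm_apply, hg]⟩
  · -- compatibility with right multiplication
    intro z f
    induction z using TensorProduct.induction_on with
    | zero => simp
    | tmul x g =>
      rw [hκ]
      simp only [TensorProduct.map_tmul, LinearMap.id_coe, id_eq, TensorProduct.lift.tmul,
        LinearMap.comp_apply, Submodule.coe_subtype]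
      exact (hactmul (x : M) g f).symm
    | add z1 z2 h1 h2 =>
      simp only [map_add, LinearMap.add_apply, h1, h2]
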